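/- Let a < b be real numbers and let u : ℝ → ℝ be convex on the open interval (a,b) (ConvexOn ℝ (Ioo a b) u). Let x₀ ∈ (a,b), δ > 0 with (x₀ - δ, x₀ + δ) ⊆ (a,b), and let φ : ℝ → ℝ be twice continuously differentiable (ContDiff ℝ 2 φ) with φ x₀ = u x₀ and u x ≤ φ x for all x ∈ (x₀ - δ, x₀ + δ). Then the second derivative satisfies deriv (deriv φ) x₀ ≥ 0. (A convex function is a viscosity subsolution of u'' = 0.) -/

import Mathlib

open Set Filter Topology

/-- On the interior, the iterated derivative within `Icc c d` agrees with the global one. -/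
lemma iteratedDerivWithin_Icc_eq {φ : ℝ → ℝ} {c d ξ : ℝ} (n : ℕ) (hξ : ξ ∈ Set.Ioo c d) :
    iteratedDerivWithin n φ (Set.Icc c d) ξ = iteratedDeriv n φ ξ := by
  have h1 : Set.Icc c d ∈ 𝓝 ξ := Icc_mem_nhds hξ.1 hξ.2
  have h2 : iteratedFDerivWithin ℝ n φ (Set.univ ∩ Set.Icc c d) ξ =
      iteratedFDerivWithin ℝ n φ Set.univ ξ := iteratedFDerivWithin_inter h1
  rw [Set.univ_inter, iteratedFDerivWithin_univ] at h2
  rw [iteratedDerivWithin_eq_iteratedFDerivWithin, h2, iteratedDeriv_eq_iteratedFDeriv]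

/-- Second order Taylor expansion with Lagrange remainder for a `C²` function. -/
lemma taylor_two {φ : ℝ → ℝ} (hφ : ContDiff ℝ 2 φ) {c x : ℝ} (hcx : c < x) :
    ∃ ξ ∈ Set.Ioo c x,
      φ x = φ c + deriv φ c * (x - c) + iteratedDeriv 2 φ ξ * (x - c) ^ 2 / 2 := by
  have hφ1 : ContDiff ℝ (1 + 1) φ := by exact_mod_cast hφ
  have hd : ContDiff ℝ 1 (deriv φ) := (contDiff_succ_iff_deriv.mp hφ1).2.2
  have hf : ContDiffOn ℝ 1 φ (Set.Icc c x) := (hφ.of_le (by norm_num)).contDiffOn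
  have hf' : DifferentiableOn ℝ (iteratedDerivWithin 1 φ (Set.Icc c x)) (Set.Ioo c x) := by
    apply (hd.differentiable one_ne_zero).differentiableOn.congr
    intro y hy
    rw [iteratedDerivWithin_Icc_eq 1 hy, iteratedDeriv_one]
  obtain ⟨ξ, hξ, hT⟩ := taylor_mean_remainder_lagrange (n := 1) hcx.ne
    (by rwa [uIcc_of_le hcx.le]) (by rwa [uIcc_of_le hcx.le, uIoo_of_lt hcx])
  rw [uIoo_of_lt hcx] at hξ
  rw [uIcc_of_le hcx.le] at hT
  refine ⟨ξ, hξ, ?_⟩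
  have hud : UniqueDiffWithinAt ℝ (Set.Icc c x) c :=
    (uniqueDiffOn_Icc hcx) c ⟨le_rfl, hcx.le⟩
  have hpoly : taylorWithinEval φ 1 (Set.Icc c x) c x = φ c + deriv φ c * (x - c) := by
    rw [taylor_within_apply]
    have h1 : iteratedDerivWithin 1 φ (Set.Icc c x) c = deriv φ c := by
      rw [iteratedDerivWithin_one]
      exact (hφ.differentiable (by norm_num)).differentiableAt.derivWithin hud
    simp [Finset.sum_range_succ, h1]
    ring
  rw [hpoly, iteratedDerivWithin_Icc_eq 2 hξ] at hT
  norm_num [Nat.factorial] at hT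
  linarith [hT]

theorem convex_is_viscosity_subsolution (a b : ℝ) (hab : a < b) (u : ℝ → ℝ)
    (hu : ConvexOn ℝ (Set.Ioo a b) u) (x₀ δ : ℝ) (hx₀ : x₀ ∈ Set.Ioo a b)
    (hδ : 0 < δ) (hsub : Set.Ioo (x₀ - δ) (x₀ + δ) ⊆ Set.Ioo a b)
    (φ : ℝ → ℝ) (hφ : ContDiff ℝ 2 φ) (htouch : φ x₀ = u x₀)
    (habove : ∀ x ∈ Set.Ioo (x₀ - δ) (x₀ + δ), u x ≤ φ x) :
    0 ≤ deriv (deriv φ) x₀ := by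
  by_contra hC
  push_neg at hC
  have hC2 : iteratedDeriv 2 φ x₀ = deriv (deriv φ) x₀ := by
    rw [iteratedDeriv_succ, iteratedDeriv_one]
  set C := deriv (deriv φ) x₀ with hCdef
  -- continuity of the second derivative
  have hcont : Continuous (iteratedDeriv 2 φ) :=
    hφ.continuous_iteratedDeriv 2 (by norm_num)
  have hnhds : (iteratedDeriv 2 φ) ⁻¹' Set.Iio (C / 2) ∈ 𝓝 x₀ := by
    apply hcont.continuousAt.preimage_mem_nhds
    apply Iio_mem_nhds
    rw [hC2]
    linarith
  obtain ⟨ε, hε, hball⟩ := Metric.mem_nhds_iff.mp hnhds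
  -- choose a small h
  set h : ℝ := min (δ / 2) (ε / 2) with hhdef
  have hh : 0 < h := lt_min (by linarith) (by linarith)
  have hhδ : h < δ := lt_of_le_of_lt (min_le_left _ _) (by linarith)
  have hhε : h < ε := lt_of_le_of_lt (min_le_right _ _) (by linarith)
  have hsmall : ∀ y : ℝ, |y - x₀| < ε → iteratedDeriv 2 φ y < C / 2 := by
    intro y hy
    exact hball (by simpa [Metric.mem_ball, Real.dist_eq] using hy)
  -- Taylor expansion to the right
  obtain ⟨ξ₁, hξ₁, hT₁⟩ := taylor_two hφ (show x₀ < x₀ + h by linarith)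
  -- Taylor expansion on the left via the reflected function
  set ψ : ℝ → ℝ := fun t => φ (2 * x₀ - t) with hψdef
  have hψ : ContDiff ℝ 2 ψ := hφ.comp (contDiff_const.sub contDiff_id)
  obtain ⟨ξ₂, hξ₂, hT₂⟩ := taylor_two hψ (show x₀ < x₀ + h by linarith)
  -- identify the quantities in the reflected expansion
  have hψval : ∀ t : ℝ, ψ t = φ (2 * x₀ - t) := fun t => rfl
  have hψit : ∀ t : ℝ, iteratedDeriv 2 ψ t = iteratedDeriv 2 φ (2 * x₀ - t) := by
    intro t
    have e1 : ψ = fun t => (fun z => φ (2 * x₀ + z)) (-t) := by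
      funext t; simp [hψdef, sub_eq_add_neg]
    rw [e1, iteratedDeriv_comp_neg 2 (fun z => φ (2 * x₀ + z)) t]
    rw [iteratedDeriv_comp_const_add 2 φ (2 * x₀)]
    norm_num [sub_eq_add_neg]
  have hψderiv : deriv ψ x₀ = -deriv φ x₀ := by
    have e1 : ψ = fun t => φ (2 * x₀ - t) := rfl
    rw [e1, deriv_comp_const_sub]
    simp only [show 2 * x₀ - x₀ = x₀ by ring]
  -- use the two expansions
  rw [hψval, hψval] at hT₂
  have hre : 2 * x₀ - (x₀ + h) = x₀ - h := by ring
  have hre2 : 2 * x₀ - x₀ = x₀ := by ring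
  rw [hre] at hT₂
  rw [hre2] at hT₂
  have hψd : deriv ψ x₀ = -deriv φ x₀ := hψderiv
  rw [hψd, hψit ξ₂] at hT₂
  -- bounds on the second derivative at the intermediate points
  have hb₁ : iteratedDeriv 2 φ ξ₁ < C / 2 := by
    apply hsmall
    rw [abs_lt]
    constructor <;> [linarith [hξ₁.1]; linarith [hξ₁.2]]
  have hb₂ : iteratedDeriv 2 φ (2 * x₀ - ξ₂) < C / 2 := by
    apply hsmall
    rw [abs_lt]
    constructor <;> [linarith [hξ₂.2]; linarith [hξ₂.1]]
  -- convexity: midpoint inequality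
  have hmem₁ : x₀ - h ∈ Set.Ioo (x₀ - δ) (x₀ + δ) := ⟨by linarith, by linarith⟩
  have hmem₂ : x₀ + h ∈ Set.Ioo (x₀ - δ) (x₀ + δ) := ⟨by linarith, by linarith⟩
  have hconv := hu.2 (hsub hmem₁) (hsub hmem₂)
    (by norm_num : (0:ℝ) ≤ 1/2) (by norm_num : (0:ℝ) ≤ 1/2) (by norm_num)
  have hmid : (1/2 : ℝ) • (x₀ - h) + (1/2 : ℝ) • (x₀ + h) = x₀ := by
    simp [smul_eq_mul]; ring
  rw [hmid] at hconv
  simp only [smul_eq_mul] at hconv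
  have hu₀ : 2 * φ x₀ ≤ φ (x₀ - h) + φ (x₀ + h) := by
    have h1 := habove _ hmem₁
    have h2 := habove _ hmem₂
    rw [htouch]
    linarith
  -- contradiction
  have hpos : 0 < h ^ 2 := by positivity
  nlinarith [hT₁, hT₂, hb₁, hb₂, hu₀, hC, hpos]
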